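/- Let $f : (t_0 - \rho_0, t_0 + \rho_0) \to \mathbb{R}$ be $C^2$ with $f'' \ge \sigma_0 > 0$ and $\sup |f'| \le 1$ on the interval. Set $\sigma_1 = \min(\sigma_0, 1)$. If $f$ has two zeros $v_1 < v_2$ with $|v_i - t_0| < \rho_0/2$ for $i = 1, 2$, then $-f'(v_1) > \sigma_1^2 (v_2 - v_1)^2 / 256$ and $f'(v_2) > \sigma_1^2 (v_2 - v_1)^2 / 256$. -/

import Mathlib

/-- Part (5) of the elementary calculus lemma: at two zeros `v₁ < v₂` of a strictly convex
function with `|f'| ≤ 1`, the derivative is quantitatively negative at `v₁` and positive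
at `v₂`. -/
theorem deriv_lower_bound_at_two_zeros (t0 ρ0 σ0 : ℝ) (hρ0 : 0 < ρ0) (hσ0 : 0 < σ0)
    (f : ℝ → ℝ) (hf : ContDiffOn ℝ 2 f (Set.Ioo (t0 - ρ0) (t0 + ρ0)))
    (hconv : ∀ x ∈ Set.Ioo (t0 - ρ0) (t0 + ρ0), σ0 ≤ deriv (deriv f) x)
    (hder : ∀ x ∈ Set.Ioo (t0 - ρ0) (t0 + ρ0), |deriv f x| ≤ 1)
    (v1 v2 : ℝ) (hlt : v1 < v2)
    (hv1 : |v1 - t0| < ρ0 / 2) (hv2 : |v2 - t0| < ρ0 / 2)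
    (hz1 : f v1 = 0) (hz2 : f v2 = 0) :
    (min σ0 1) ^ 2 * (v2 - v1) ^ 2 / 256 < -deriv f v1 ∧
    (min σ0 1) ^ 2 * (v2 - v1) ^ 2 / 256 < deriv f v2 := by
  set I := Set.Ioo (t0 - ρ0) (t0 + ρ0) with hI
  have hIo : IsOpen I := isOpen_Ioo
  obtain ⟨h1a, h1b⟩ := abs_lt.mp hv1
  obtain ⟨h2a, h2b⟩ := abs_lt.mp hv2
  have hv1I : v1 ∈ I := ⟨by linarith, by linarith⟩
  have hv2I : v2 ∈ I := ⟨by linarith, by linarith⟩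
  have hsub : Set.Icc v1 v2 ⊆ I := fun x hx => ⟨by linarith [hx.1], by linarith [hx.2]⟩
  have hfd : DifferentiableOn ℝ f I := hf.differentiableOn (by norm_num)
  have hf'cd : ContDiffOn ℝ 1 (deriv f) I := hf.deriv_of_isOpen hIo (by norm_num)
  have hf'd : DifferentiableOn ℝ (deriv f) I := hf'cd.differentiableOn one_ne_zero
  have hf'c : ContinuousOn (deriv f) I := hf'd.continuousOn
  have hfc : ContinuousOn f I := hfd.continuousOn
  have hintI : interior I = I := hIo.interior_eq
  -- monotonicity of deriv f on I
  have hmono : MonotoneOn (deriv f) I := by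
    apply monotoneOn_of_deriv_nonneg (convex_Ioo _ _) hf'c
    · rw [hintI]; exact hf'd
    · intro x hx; rw [hintI] at hx; linarith [hconv x hx]
  have hd : (0:ℝ) < v2 - v1 := by linarith
  -- σ0 * (v2 - v1) ≤ 2
  have hbound : σ0 * (v2 - v1) ≤ 2 := by
    obtain ⟨c, hc, hceq⟩ := exists_deriv_eq_slope (deriv f) hlt (hf'c.mono hsub)
      (hf'd.mono (fun x hx => hsub (Set.Ioo_subset_Icc_self hx)))
    have hcI : c ∈ I := hsub (Set.Ioo_subset_Icc_self hc)
    have h1 := hconv c hcI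
    have h2 := abs_le.mp (hder v1 hv1I)
    have h3 := abs_le.mp (hder v2 hv2I)
    rw [hceq] at h1
    have := (div_le_div_iff₀ hd hd).mp (le_of_eq (rfl : (deriv f v2 - deriv f v1)/(v2-v1) = _))
    have h4 : σ0 * (v2 - v1) ≤ deriv f v2 - deriv f v1 := by
      have := (le_div_iff₀ hd).mp h1
      linarith
    linarith [h2.1, h2.2, h3.1, h3.2]
  -- convexity of g = f - σ0/2 x²
  set g : ℝ → ℝ := fun x => f x - σ0 / 2 * x ^ 2 with hg
  have hdg : ∀ x ∈ I, deriv g x = deriv f x - σ0 * x := by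
    intro x hx
    have h1 : DifferentiableAt ℝ f x := hfd.differentiableAt (hIo.mem_nhds hx)
    have h2 : DifferentiableAt ℝ (fun x : ℝ => σ0 / 2 * x ^ 2) x := by fun_prop
    rw [hg, deriv_fun_sub h1 h2, deriv_const_mul _ (by fun_prop)]
    simp [deriv_pow]
    ring
  have hgc : ContinuousOn g I := hfc.sub (by fun_prop)
  have hgd : DifferentiableOn ℝ g I := hfd.sub (by fun_prop)
  have haux : DifferentiableOn ℝ (fun y => deriv f y - σ0 * y) I :=
    hf'd.sub (by fun_prop)
  have hgd' : DifferentiableOn ℝ (deriv g) I := haux.congr hdg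
  have h2g : ∀ x ∈ I, deriv (deriv g) x = deriv (deriv f) x - σ0 := by
    intro x hx
    have heq : deriv g =ᶠ[nhds x] (fun y => deriv f y - σ0 * y) :=
      Filter.eventuallyEq_of_mem (hIo.mem_nhds hx) hdg
    rw [heq.deriv_eq, deriv_fun_sub (hf'd.differentiableAt (hIo.mem_nhds hx)) (by fun_prop)]
    have : deriv (fun y : ℝ => σ0 * y) x = σ0 := by
      simpa using ((hasDerivAt_id x).const_mul σ0).deriv
    rw [this]
  have hgconv : ConvexOn ℝ I g := by
    apply convexOn_of_deriv2_nonneg (convex_Ioo _ _) hgc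
    · rw [hintI]; exact hgd
    · rw [hintI]; exact hgd'
    · intro x hx
      rw [hintI] at hx
      show 0 ≤ deriv^[2] g x
      have : deriv^[2] g x = deriv (deriv g) x := by
        simp [Function.iterate_succ, Function.comp]
      rw [this, h2g x hx]
      linarith [hconv x hx]
  -- midpoint bound
  set m : ℝ := (v1 + v2) / 2 with hm
  have hmI : m ∈ I := ⟨by simp only [hm]; linarith, by simp only [hm]; linarith⟩
  have hmid : f m ≤ -σ0 * (v2 - v1) ^ 2 / 8 := by
    have := hgconv.2 hv1I hv2I (by norm_num : (0:ℝ) ≤ 1/2) (by norm_num : (0:ℝ) ≤ 1/2)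
      (by norm_num)
    simp only [smul_eq_mul, hg] at this
    have hme : (1/2 : ℝ) * v1 + (1/2 : ℝ) * v2 = m := by rw [hm]; ring
    rw [hme, hz1, hz2] at this
    rw [hm] at this ⊢
    nlinarith [this]
  have hm1 : v1 < m := by rw [hm]; linarith
  have hm2 : m < v2 := by rw [hm]; linarith
  -- MVT on [v1, m]
  have hfv1 : deriv f v1 ≤ -σ0 * (v2 - v1) / 4 := by
    obtain ⟨η, hη, hηe⟩ := exists_deriv_eq_slope f hm1
      (hfc.mono (fun x hx => hsub ⟨hx.1, le_trans hx.2 (le_of_lt hm2)⟩))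
      (hfd.mono (fun x hx => hsub ⟨le_of_lt hx.1, le_of_lt (lt_trans hx.2 hm2)⟩))
    have hηI : η ∈ I := hsub ⟨le_of_lt hη.1, le_of_lt (lt_trans hη.2 hm2)⟩
    have h1 : deriv f v1 ≤ deriv f η := hmono hv1I hηI (le_of_lt hη.1)
    rw [hηe, hz1] at h1
    have hmv : m - v1 = (v2 - v1) / 2 := by rw [hm]; ring
    rw [hmv] at h1
    have h2 : (f m - 0) / ((v2 - v1) / 2) ≤ (-σ0 * (v2-v1)^2/8) / ((v2-v1)/2) := by
      apply div_le_div_of_nonneg_right ?_ (by linarith)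
      · simpa using hmid
    calc deriv f v1 ≤ _ := h1
      _ ≤ _ := h2
      _ = -σ0 * (v2 - v1) / 4 := by field_simp; ring
  -- MVT on [m, v2]
  have hfv2 : σ0 * (v2 - v1) / 4 ≤ deriv f v2 := by
    obtain ⟨ξ, hξ, hξe⟩ := exists_deriv_eq_slope f hm2
      (hfc.mono (fun x hx => hsub ⟨le_trans (le_of_lt hm1) hx.1, hx.2⟩))
      (hfd.mono (fun x hx => hsub ⟨le_of_lt (lt_trans hm1 hx.1), le_of_lt hx.2⟩))
    have hξI : ξ ∈ I := hsub ⟨le_of_lt (lt_trans hm1 hξ.1), le_of_lt hξ.2⟩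
    have h1 : deriv f ξ ≤ deriv f v2 := hmono hξI hv2I (le_of_lt hξ.2)
    rw [hξe, hz2] at h1
    have hmv : v2 - m = (v2 - v1) / 2 := by rw [hm]; ring
    rw [hmv] at h1
    have h2 : (σ0 * (v2-v1)^2/8) / ((v2-v1)/2) ≤ (0 - f m) / ((v2 - v1) / 2) := by
      apply div_le_div_of_nonneg_right ?_ (by linarith)
      · linarith
    calc σ0 * (v2 - v1) / 4 = (σ0 * (v2-v1)^2/8) / ((v2-v1)/2) := by field_simp; ring
      _ ≤ _ := h2
      _ ≤ _ := h1
  -- final arithmetic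
  have hσ1a : min σ0 1 ≤ σ0 := min_le_left _ _
  have hσ1b : min σ0 1 ≤ 1 := min_le_right _ _
  have hσ1pos : 0 < min σ0 1 := lt_min hσ0 one_pos
  constructor
  · nlinarith [mul_pos hσ1pos hd, mul_pos hσ0 hd, sq_nonneg (min σ0 1 * (v2 - v1)),
      mul_le_mul_of_nonneg_right hσ1a (le_of_lt hd)]
  · nlinarith [mul_pos hσ1pos hd, mul_pos hσ0 hd, sq_nonneg (min σ0 1 * (v2 - v1)),
      mul_le_mul_of_nonneg_right hσ1a (le_of_lt hd)]
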